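/- Let (X,d) be a metric space and μ a Borel measure on X, and let N > 1 be a real number. Assume that (X,d,μ) satisfies the N-Brunn–Minkowski inequality, that μ(B_x(r)) < ∞ for every x ∈ X and r > 0, and that there exists θ > 0 such that for every x ∈ X the ratio μ(B_x(R))/(ω_N R^N) converges to θ as R → ∞. Then for every nonempty bounded Borel subset Ω ⊆ X with 0 < μ(Ω) < ∞ one has μ⁺(Ω) ≥ N · ω_N^{1/N} · θ^{1/N} · μ(Ω)^{(N−1)/N}. -/

import Mathlib

open MeasureTheory Metric Filter Set
open scoped Topology ENNReal

/-- The constant `ω_N = π^{N/2} / Γ(1 + N/2)`. -/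
noncomputable def omegaN (N : ℝ) : ℝ := Real.pi ^ (N / 2) / Real.Gamma (1 + N / 2)

/-- The `ε`-neighborhood `Ω_ε = {x : ∃ y ∈ Ω, d(x,y) < ε}`. -/
def eNbhd {X : Type*} [MetricSpace X] (Ω : Set X) (ε : ℝ) : Set X :=
  {x | ∃ y ∈ Ω, dist x y < ε}

/-- The Minkowski content `μ⁺(Ω) = liminf_{ε → 0⁺} μ(Ω_ε \ Ω)/ε`. -/
noncomputable def minkowskiContent {X : Type*} [MetricSpace X] [MeasurableSpace X]
    (μ : Measure X) (Ω : Set X) : ℝ≥0∞ :=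
  Filter.liminf (fun ε : ℝ => μ (eNbhd Ω ε \ Ω) / ENNReal.ofReal ε) (𝓝[>] (0 : ℝ))

/-- The `s`-interpolant set `Z_s(A,B)`. -/
def interpSet {X : Type*} [MetricSpace X] (s : ℝ) (A B : Set X) : Set X :=
  ⋃ x ∈ A, ⋃ y ∈ B,
    {z | dist x z = s * dist x y ∧ dist z y = (1 - s) * dist x y}

/-- The `N`-Brunn–Minkowski inequality:
`μ(Z_s(A,B))^{1/N} ≥ (1-s) μ(A)^{1/N} + s μ(B)^{1/N}`. -/
def NBrunnMinkowski {X : Type*} [MetricSpace X] [MeasurableSpace X]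
    (μ : Measure X) (N : ℝ) : Prop :=
  ∀ A B : Set X, MeasurableSet A → MeasurableSet B → 0 < μ A → 0 < μ B →
    ∀ s ∈ Set.Icc (0 : ℝ) 1,
      ENNReal.ofReal (1 - s) * μ A ^ (1 / N) + ENNReal.ofReal s * μ B ^ (1 / N)
        ≤ μ (interpSet s A B) ^ (1 / N)

/-- Scaled Bernoulli / tangent-line inequality for `rpow`. -/
lemma bern_aux {A c N : ℝ} (hA : 0 < A) (hc : 0 ≤ c) (hN : 1 ≤ N) :
    A ^ N + N * A ^ (N - 1) * (c - A) ≤ c ^ N := by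
  have hs : -1 ≤ c / A - 1 := by
    have h0 : 0 ≤ c / A := div_nonneg hc hA.le
    linarith
  have h := one_add_mul_self_le_rpow_one_add hs hN
  rw [show (1 + (c / A - 1)) = c / A by ring] at h
  have hAN : 0 < A ^ N := Real.rpow_pos_of_pos hA N
  have h2 := mul_le_mul_of_nonneg_right h hAN.le
  have e1 : (c / A) ^ N * A ^ N = c ^ N := by
    rw [Real.div_rpow hc hA.le]
    field_simp
  have e2 : (1 + N * (c / A - 1)) * A ^ N = A ^ N + N * A ^ (N - 1) * (c - A) := by
    have hA1 : A ^ (N - 1) = A ^ N / A := by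
      rw [Real.rpow_sub hA, Real.rpow_one]
    rw [hA1]
    field_simp
  rw [e1, e2] at h2
  exact h2

/-- Sharp isoperimetric inequality in spaces satisfying the `N`-Brunn–Minkowski
inequality and having Euclidean volume growth:
`μ⁺(Ω) ≥ N ω_N^{1/N} θ^{1/N} μ(Ω)^{(N-1)/N}`. -/
theorem sharp_isoperimetric_inequality
    {X : Type*} [MetricSpace X] [MeasurableSpace X] [BorelSpace X]
    (μ : Measure X) (N : ℝ) (hN : 1 < N)
    (hBM : NBrunnMinkowski μ N)
    (hfin : ∀ (x : X) (r : ℝ), 0 < r → μ (Metric.ball x r) < ⊤)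
    (θ : ℝ) (hθ : 0 < θ)
    (hAVR : ∀ x : X,
      Tendsto (fun r : ℝ => (μ (Metric.ball x r)).toReal / (omegaN N * r ^ N))
        atTop (𝓝 θ))
    (Ω : Set X) (hne : Ω.Nonempty) (hbdd : Bornology.IsBounded Ω)
    (hmeas : MeasurableSet Ω) (h0 : 0 < μ Ω) (hfinΩ : μ Ω < ⊤) :
    ENNReal.ofReal (N * omegaN N ^ (1 / N) * θ ^ (1 / N)) * μ Ω ^ ((N - 1) / N)
      ≤ minkowskiContent μ Ω := by
  obtain ⟨x₀, hx₀⟩ := hne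
  obtain ⟨D, hD0, hΩD⟩ := hbdd.subset_ball_lt 0 x₀
  have hN0 : (0:ℝ) < N := lt_trans one_pos hN
  set a : ℝ := (μ Ω).toReal with ha_def
  have ha : 0 < a := ENNReal.toReal_pos h0.ne' hfinΩ.ne
  set A1 : ℝ := a ^ (1/N) with hA1def
  have hA1 : 0 < A1 := Real.rpow_pos_of_pos ha _
  have hA1N : A1 ^ N = a := by
    rw [hA1def, ← Real.rpow_mul ha.le, one_div_mul_cancel hN0.ne', Real.rpow_one]
  have hω : 0 < omegaN N := by
    apply div_pos (Real.rpow_pos_of_pos Real.pi_pos _)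
    exact Real.Gamma_pos_of_pos (by linarith)
  set K : ℝ → ℝ := fun R =>
    N * A1 ^ (N-1) * (((μ (ball x₀ R)).toReal ^ (1/N) - A1) / (D + R)) with hK
  -- Claim 1: for each large radius R, `ofReal (K R)` bounds the Minkowski content below.
  have claim1 : ∀ R, D < R → ENNReal.ofReal (K R) ≤ minkowskiContent μ Ω := by
    intro R hR
    have hR0 : 0 < R := hD0.trans hR
    have hballfin : μ (ball x₀ R) ≠ ⊤ := (hfin x₀ R hR0).ne
    have hballpos : 0 < μ (ball x₀ R) :=
      h0.trans_le (measure_mono (hΩD.trans (ball_subset_ball hR.le)))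
    set b : ℝ := (μ (ball x₀ R)).toReal ^ (1/N) with hbdef
    have hb0 : 0 ≤ b := Real.rpow_nonneg ENNReal.toReal_nonneg _
    have hDR : (0:ℝ) < D + R := by linarith
    refine Filter.le_liminf_of_le (by isBoundedDefault) ?_
    have hmem : Ioo (0:ℝ) (D+R) ∈ 𝓝[>] (0:ℝ) :=
      Ioo_mem_nhdsGT_of_mem ⟨le_refl 0, by linarith⟩
    filter_upwards [hmem] with ε hε
    obtain ⟨hε0, hεDR⟩ := hε
    set s : ℝ := ε / (D + R) with hs_def
    have hs0 : 0 < s := div_pos hε0 hDR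
    have hs1 : s < 1 := (div_lt_one hDR).2 hεDR
    -- the interpolant set is contained in the ε-neighborhood
    have hsub : interpSet s Ω (ball x₀ R) ⊆ eNbhd Ω ε := by
      intro z hz
      simp only [interpSet, mem_iUnion, exists_prop] at hz
      obtain ⟨x, hx, y, hy, hz1, _⟩ := hz
      refine ⟨x, hx, ?_⟩
      rw [dist_comm, hz1]
      have hxy : dist x y < D + R :=
        calc dist x y ≤ dist x x₀ + dist x₀ y := dist_triangle _ _ _
          _ < D + R := by
              have h1 : dist x x₀ < D := hΩD hx
              have h2 : dist x₀ y < R := by rw [dist_comm]; exact mem_ball.1 hy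
              linarith
      calc s * dist x y < s * (D + R) := by
            exact mul_lt_mul_of_pos_left hxy hs0
        _ = ε := by rw [hs_def]; field_simp
    -- the ε-neighborhood has finite measure
    have hsubball : eNbhd Ω ε ⊆ ball x₀ (D + ε) := by
      rintro z ⟨y, hy, hzy⟩
      have h1 : dist y x₀ < D := hΩD hy
      calc dist z x₀ ≤ dist z y + dist y x₀ := dist_triangle _ _ _
        _ < D + ε := by linarith
    have hfinε : μ (eNbhd Ω ε) < ⊤ :=
      lt_of_le_of_lt (measure_mono hsubball) (hfin x₀ (D + ε) (by linarith))
    set e : ℝ := (μ (eNbhd Ω ε)).toReal with he_def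
    set m : ℝ≥0∞ := μ (eNbhd Ω ε \ Ω) with hm_def
    have hmfin : m ≠ ⊤ := (lt_of_le_of_lt (measure_mono diff_subset) hfinε).ne
    have hem : e ≤ m.toReal + a := by
      have h1 : μ (eNbhd Ω ε) ≤ m + μ Ω := by
        refine le_trans (measure_mono ?_) (measure_union_le _ _)
        intro z hz
        by_cases h : z ∈ Ω
        · exact Or.inr h
        · exact Or.inl ⟨hz, h⟩
      calc e ≤ (m + μ Ω).toReal :=
            ENNReal.toReal_mono (by
              exact ENNReal.add_ne_top.2 ⟨hmfin, hfinΩ.ne⟩) h1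
        _ = m.toReal + a := ENNReal.toReal_add hmfin hfinΩ.ne
    -- Brunn–Minkowski
    set c : ℝ := (1 - s) * A1 + s * b with hc_def
    have hc0 : 0 < c :=
      add_pos_of_pos_of_nonneg (mul_pos (by linarith) hA1) (mul_nonneg hs0.le hb0)
    have hμΩ : μ Ω = ENNReal.ofReal a := (ENNReal.ofReal_toReal hfinΩ.ne).symm
    have hμB : μ (ball x₀ R) = ENNReal.ofReal ((μ (ball x₀ R)).toReal) :=
      (ENNReal.ofReal_toReal hballfin).symm
    have hBpos : 0 < (μ (ball x₀ R)).toReal := ENNReal.toReal_pos hballpos.ne' hballfin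
    have hbm := hBM Ω (ball x₀ R) hmeas measurableSet_ball h0 hballpos s ⟨hs0.le, hs1.le⟩
    have key : ENNReal.ofReal (c ^ N) ≤ μ (eNbhd Ω ε) := by
      have h1 : ENNReal.ofReal c ≤ μ (eNbhd Ω ε) ^ (1/N) := by
        calc ENNReal.ofReal c
            = ENNReal.ofReal (1-s) * μ Ω ^ (1/N)
              + ENNReal.ofReal s * μ (ball x₀ R) ^ (1/N) := by
              rw [hμΩ, hμB, ENNReal.ofReal_rpow_of_pos ha,
                ENNReal.ofReal_rpow_of_pos hBpos,
                ← ENNReal.ofReal_mul (by linarith : (0:ℝ) ≤ 1 - s),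
                ← ENNReal.ofReal_mul hs0.le,
                ← ENNReal.ofReal_add (mul_nonneg (by linarith) hA1.le)
                  (mul_nonneg hs0.le hb0)]
          _ ≤ μ (interpSet s Ω (ball x₀ R)) ^ (1/N) := hbm
          _ ≤ μ (eNbhd Ω ε) ^ (1/N) :=
              ENNReal.rpow_le_rpow (measure_mono hsub) (by positivity)
      have h2 := ENNReal.rpow_le_rpow h1 hN0.le
      rw [← ENNReal.rpow_mul, one_div_mul_cancel hN0.ne', ENNReal.rpow_one,
        ENNReal.ofReal_rpow_of_pos hc0] at h2
      exact h2
    have hcN : c ^ N ≤ e := by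
      have h3 := ENNReal.toReal_mono hfinε.ne key
      rwa [ENNReal.toReal_ofReal (Real.rpow_nonneg hc0.le _)] at h3
    -- Bernoulli
    have hbern := bern_aux hA1 hc0.le hN.le
    have hcA1 : c - A1 = s * (b - A1) := by rw [hc_def]; ring
    have hKε : N * A1 ^ (N-1) * (c - A1) = ε * K R := by
      simp only [hcA1, hK, hs_def, hbdef]
      field_simp
    have hmge : ε * K R ≤ m.toReal := by
      have h4 : a + ε * K R ≤ c ^ N := by rw [← hKε, ← hA1N]; exact hbern
      linarith
    have hKdiv : K R ≤ m.toReal / ε := by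
      rw [le_div_iff₀ hε0]
      linarith [hmge]
    calc ENNReal.ofReal (K R) ≤ ENNReal.ofReal (m.toReal / ε) :=
          ENNReal.ofReal_le_ofReal hKdiv
      _ = m / ENNReal.ofReal ε := by
          rw [ENNReal.ofReal_div_of_pos hε0, ENNReal.ofReal_toReal hmfin]
  -- Claim 2: `K R` converges to the isoperimetric constant.
  set L : ℝ := N * A1 ^ (N-1) * (omegaN N ^ (1/N) * θ ^ (1/N)) with hL
  have claim2 : Tendsto K atTop (𝓝 L) := by
    have hKR : Tendsto (fun R : ℝ =>
        ((μ (ball x₀ R)).toReal ^ (1/N) - A1) / (D + R)) atTop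
        (𝓝 (omegaN N ^ (1/N) * θ ^ (1/N))) := by
      have hDRtop : Tendsto (fun R : ℝ => D + R) atTop atTop :=
        tendsto_atTop_add_const_left atTop D tendsto_id
      have t3 : Tendsto (fun R : ℝ => A1 / (D + R)) atTop (𝓝 0) :=
        (tendsto_const_nhds (x := A1)).div_atTop hDRtop
      have t2 : Tendsto (fun R : ℝ => R / (D + R)) atTop (𝓝 1) := by
        have hD0' : Tendsto (fun R : ℝ => D / (D + R)) atTop (𝓝 0) :=
          (tendsto_const_nhds (x := D)).div_atTop hDRtop
        have t2' : Tendsto (fun R : ℝ => 1 - D / (D + R)) atTop (𝓝 1) := by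
          simpa using (tendsto_const_nhds (x := (1:ℝ))).sub hD0'
        refine t2'.congr' ?_
        filter_upwards [eventually_gt_atTop (0:ℝ)] with R hR
        have hDR : D + R ≠ 0 := by positivity
        field_simp
        ring
      have t1 : Tendsto (fun R : ℝ =>
          ((μ (ball x₀ R)).toReal / (omegaN N * R ^ N)) ^ (1/N)) atTop
          (𝓝 (θ ^ (1/N))) :=
        (hAVR x₀).rpow_const (Or.inr (by positivity))
      have tmain : Tendsto (fun R : ℝ =>
          ((μ (ball x₀ R)).toReal / (omegaN N * R ^ N)) ^ (1/N)
            * omegaN N ^ (1/N) * (R / (D + R)) - A1 / (D + R)) atTop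
          (𝓝 (θ ^ (1/N) * omegaN N ^ (1/N) * 1 - 0)) :=
        ((t1.mul_const _).mul t2).sub t3
      rw [mul_one, sub_zero] at tmain
      rw [show omegaN N ^ (1/N) * θ ^ (1/N) = θ ^ (1/N) * omegaN N ^ (1/N) by ring]
      refine tmain.congr' ?_
      filter_upwards [eventually_gt_atTop (0:ℝ)] with R hR
      have hRN : (0:ℝ) < R ^ N := Real.rpow_pos_of_pos hR N
      have hMb0 : 0 ≤ (μ (ball x₀ R)).toReal := ENNReal.toReal_nonneg
      have hgb : ((μ (ball x₀ R)).toReal / (omegaN N * R ^ N)) ^ (1/N)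
          * omegaN N ^ (1/N) * R = (μ (ball x₀ R)).toReal ^ (1/N) := by
        rw [Real.div_rpow hMb0 (by positivity), Real.mul_rpow hω.le hRN.le]
        have h1 : (R ^ N) ^ (1/N) = R := by
          rw [← Real.rpow_mul hR.le, mul_one_div_cancel hN0.ne', Real.rpow_one]
        rw [h1]
        field_simp
      have h2 : ((μ (ball x₀ R)).toReal / (omegaN N * R ^ N)) ^ (1/N)
          * omegaN N ^ (1/N) * (R / (D + R))
          = (((μ (ball x₀ R)).toReal / (omegaN N * R ^ N)) ^ (1/N)
            * omegaN N ^ (1/N) * R) / (D + R) := by ring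
      rw [h2, hgb, sub_div]
    exact (hKR.const_mul _).congr fun R => rfl
  have claim2' : Tendsto (fun R => ENNReal.ofReal (K R)) atTop (𝓝 (ENNReal.ofReal L)) :=
    (ENNReal.continuous_ofReal.tendsto L).comp claim2
  have final : ENNReal.ofReal L ≤ minkowskiContent μ Ω :=
    le_of_tendsto claim2'
      (eventually_atTop.2 ⟨D + 1, fun R hR => claim1 R (by linarith)⟩)
  -- rewrite the goal
  have hΩpow : μ Ω ^ ((N-1)/N) = ENNReal.ofReal (A1 ^ (N-1)) := by
    rw [show μ Ω = ENNReal.ofReal a from (ENNReal.ofReal_toReal hfinΩ.ne).symm,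
      ENNReal.ofReal_rpow_of_pos ha, hA1def, ← Real.rpow_mul ha.le]
    congr 2
    field_simp
  calc ENNReal.ofReal (N * omegaN N ^ (1 / N) * θ ^ (1 / N)) * μ Ω ^ ((N - 1) / N)
      = ENNReal.ofReal L := by
        rw [hΩpow, ← ENNReal.ofReal_mul (by positivity), hL]
        congr 1
        ring
    _ ≤ minkowskiContent μ Ω := final
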